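/- Let h: ℝ^m → ℝ be convex, differentiable with L_y-Lipschitz gradient on ℝ^m, A an n×m matrix, and g(x) = max_y { ⟨Ax, y⟩ - h(y) } (assumed finite with attained maximizer y(x)). Then for all x₁, x₂ ∈ (Ker A)^⊥, ⟨∇g(x₁) - ∇g(x₂), x₁ - x₂⟩ ≥ (λ⁺_min(AᵀA)/L_y) ‖x₁ - x₂‖₂², i.e. g is (λ⁺_min(AᵀA)/L_y)-strongly convex on (Ker A)^⊥. -/

import Mathlib

open Set
open scoped InnerProductSpace

section aux
variable {E : Type*} [NormedAddCommGroup E] [InnerProductSpace ℝ E] [CompleteSpace E]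
variable {h : E → ℝ} {h' : E → E} {Ly : ℝ}

lemma line_hasDerivAt (hdiff : ∀ z, HasGradientAt h (h' z) z) (a Δ : E) (t : ℝ) :
    HasDerivAt (fun s : ℝ => h (a + s • Δ)) ⟪h' (a + t • Δ), Δ⟫_ℝ t := by
  have h1 : HasDerivAt (fun s : ℝ => a + s • Δ) Δ t := by
    simpa using ((hasDerivAt_id t).smul_const Δ).const_add a
  have h2 := hdiff (a + t • Δ)
  rw [hasGradientAt_iff_hasFDerivAt] at h2
  simpa [InnerProductSpace.toDual_apply_apply, Function.comp_def] using h2.comp_hasDerivAt t h1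

lemma descent (hLy : 0 < Ly) (hdiff : ∀ z, HasGradientAt h (h' z) z)
    (hlip : ∀ z₁ z₂, ‖h' z₁ - h' z₂‖ ≤ Ly * ‖z₁ - z₂‖) (a b : E) :
    h b ≤ h a + ⟪h' a, b - a⟫_ℝ + Ly / 2 * ‖b - a‖ ^ 2 := by
  set Δ := b - a with hΔ
  set ψ : ℝ → ℝ := fun t => h (a + t • Δ) - t * ⟪h' a, Δ⟫_ℝ - Ly / 2 * t ^ 2 * ‖Δ‖ ^ 2 with hψ
  have hd : ∀ t : ℝ, HasDerivAt ψ
      (⟪h' (a + t • Δ), Δ⟫_ℝ - ⟪h' a, Δ⟫_ℝ - Ly * t * ‖Δ‖ ^ 2) t := by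
    intro t
    have h1 := line_hasDerivAt hdiff a Δ t
    have h2 : HasDerivAt (fun s : ℝ => s * ⟪h' a, Δ⟫_ℝ) ⟪h' a, Δ⟫_ℝ t := by
      simpa using (hasDerivAt_id t).mul_const ⟪h' a, Δ⟫_ℝ
    have h3 : HasDerivAt (fun s : ℝ => Ly / 2 * s ^ 2 * ‖Δ‖ ^ 2) (Ly * t * ‖Δ‖ ^ 2) t := by
      have := (hasDerivAt_pow 2 t).const_mul (Ly / 2)
      have := this.mul_const (‖Δ‖ ^ 2)
      refine this.congr_deriv ?_
      ring
    exact (h1.sub h2).sub h3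
  have hanti : AntitoneOn ψ (Icc (0:ℝ) 1) := by
    apply antitoneOn_of_deriv_nonpos (convex_Icc 0 1)
    · exact fun t _ => (hd t).differentiableAt.continuousAt.continuousWithinAt
    · exact fun t _ => (hd t).differentiableAt.differentiableWithinAt
    · intro t ht
      rw [interior_Icc] at ht
      rw [(hd t).deriv]
      have hb1 : ⟪h' (a + t • Δ) - h' a, Δ⟫_ℝ ≤ ‖h' (a + t • Δ) - h' a‖ * ‖Δ‖ :=
        real_inner_le_norm _ _
      have hb2 : ‖h' (a + t • Δ) - h' a‖ ≤ Ly * (t * ‖Δ‖) := by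
        have := hlip (a + t • Δ) a
        simpa [norm_smul, abs_of_pos ht.1] using this
      have : ⟪h' (a + t • Δ), Δ⟫_ℝ - ⟪h' a, Δ⟫_ℝ ≤ Ly * (t * ‖Δ‖) * ‖Δ‖ := by
        rw [← inner_sub_left]
        exact hb1.trans (by nlinarith [norm_nonneg Δ, norm_nonneg (h' (a + t • Δ) - h' a)])
      nlinarith [norm_nonneg Δ]
  have := hanti (Set.left_mem_Icc.2 zero_le_one) (Set.right_mem_Icc.2 zero_le_one) zero_le_one
  simp only [hψ] at this
  have hab : a + (1:ℝ) • Δ = b := by simp [hΔ]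
  rw [hab] at this
  simp at this
  linarith

lemma subgrad (hconv : ConvexOn ℝ Set.univ h) (hdiff : ∀ z, HasGradientAt h (h' z) z)
    (a z : E) : h a + ⟪h' a, z - a⟫_ℝ ≤ h z := by
  set Δ := z - a with hΔ
  set φ : ℝ → ℝ := fun t => h (a + t • Δ) with hφ
  have hcφ : ConvexOn ℝ Set.univ φ := by
    have hc := hconv.comp_affineMap (AffineMap.lineMap a (a + Δ) : ℝ →ᵃ[ℝ] E)
    have hfun : (h ∘ (AffineMap.lineMap a (a + Δ) : ℝ →ᵃ[ℝ] E)) = φ := by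
      funext t
      simp [hφ, AffineMap.lineMap_apply, add_sub_cancel_left, add_comm]
    rw [hfun] at hc
    simpa using hc
  have hd0 : HasDerivAt φ ⟪h' a, Δ⟫_ℝ 0 := by
    have := line_hasDerivAt hdiff a Δ 0
    simpa using this
  have := hcφ.le_slope_of_hasDerivAt (Set.mem_univ (0:ℝ)) (Set.mem_univ (1:ℝ)) zero_lt_one hd0
  rw [slope_def_field] at this
  simp only [hφ] at this
  have h1 : a + (1:ℝ) • Δ = z := by simp [hΔ]
  have h0 : a + (0:ℝ) • Δ = a := by simp
  rw [h1, h0] at this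
  simp [div_one] at this
  linarith

lemma coco_key (hLy : 0 < Ly) (hconv : ConvexOn ℝ Set.univ h)
    (hdiff : ∀ z, HasGradientAt h (h' z) z)
    (hlip : ∀ z₁ z₂, ‖h' z₁ - h' z₂‖ ≤ Ly * ‖z₁ - z₂‖) (u v : E) :
    h v + ⟪h' v, u - v⟫_ℝ + 1 / (2 * Ly) * ‖h' u - h' v‖ ^ 2 ≤ h u := by
  set d := h' u - h' v with hd
  set w := u - Ly⁻¹ • d with hw
  have h1 := subgrad hconv hdiff v w
  have h2 := descent hLy hdiff hlip u w
  have e1 : w - u = -(Ly⁻¹ • d) := by rw [hw]; abel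
  have e2 : w - v = (u - v) - Ly⁻¹ • d := by rw [hw]; abel
  rw [e1] at h2
  rw [e2] at h1
  rw [inner_sub_right, inner_smul_right] at h1
  rw [inner_neg_right, inner_smul_right] at h2
  have e3 : ‖-(Ly⁻¹ • d)‖ ^ 2 = Ly⁻¹ ^ 2 * ‖d‖ ^ 2 := by
    rw [norm_neg, norm_smul]
    simp [abs_of_pos (inv_pos.2 hLy), mul_pow]
  rw [e3] at h2
  have e4 : ⟪h' u, d⟫_ℝ - ⟪h' v, d⟫_ℝ = ‖d‖ ^ 2 := by
    rw [← inner_sub_left, ← hd, real_inner_self_eq_norm_sq]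
  have hLy' : Ly⁻¹ > 0 := inv_pos.2 hLy
  have : Ly / 2 * (Ly⁻¹ ^ 2 * ‖d‖ ^ 2) = 1 / (2 * Ly) * ‖d‖ ^ 2 := by
    field_simp
  have h6 : Ly⁻¹ * ⟪h' u, d⟫_ℝ - Ly⁻¹ * ⟪h' v, d⟫_ℝ = Ly⁻¹ * ‖d‖ ^ 2 := by
    rw [← mul_sub, e4]
  have h5 : Ly⁻¹ * ‖d‖ ^ 2 = 2 * (1 / (2 * Ly) * ‖d‖ ^ 2) := by
    field_simp
  linarith

lemma cocoercive (hLy : 0 < Ly) (hconv : ConvexOn ℝ Set.univ h)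
    (hdiff : ∀ z, HasGradientAt h (h' z) z)
    (hlip : ∀ z₁ z₂, ‖h' z₁ - h' z₂‖ ≤ Ly * ‖z₁ - z₂‖) (u v : E) :
    1 / Ly * ‖h' u - h' v‖ ^ 2 ≤ ⟪h' u - h' v, u - v⟫_ℝ := by
  have h1 := coco_key hLy hconv hdiff hlip u v
  have h2 := coco_key hLy hconv hdiff hlip v u
  have e1 : ‖h' v - h' u‖ = ‖h' u - h' v‖ := norm_sub_rev _ _
  rw [e1] at h2
  have e2 : ⟪h' u - h' v, u - v⟫_ℝ = ⟪h' u, u - v⟫_ℝ - ⟪h' v, u - v⟫_ℝ := inner_sub_left _ _ _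
  have e3 : ⟪h' u, v - u⟫_ℝ = -⟪h' u, u - v⟫_ℝ := by
    rw [← inner_neg_right]; congr 1; abel
  rw [e3] at h2
  have : 1 / (2 * Ly) * ‖h' u - h' v‖ ^ 2 + 1 / (2 * Ly) * ‖h' u - h' v‖ ^ 2
      = 1 / Ly * ‖h' u - h' v‖ ^ 2 := by field_simp; ring
  linarith

end aux

section aux2
variable {E : Type*} [NormedAddCommGroup E] [InnerProductSpace ℝ E] [CompleteSpace E]

lemma max_grad_eq {h : E → ℝ} {h' : E → E} (hdiff : ∀ z, HasGradientAt h (h' z) z)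
    (c : E) (y₀ : E) (hmax : ∀ z, ⟪c, z⟫_ℝ - h z ≤ ⟪c, y₀⟫_ℝ - h y₀) :
    h' y₀ = c := by
  have hF : HasFDerivAt (fun z => ⟪c, z⟫_ℝ - h z)
      (InnerProductSpace.toDual ℝ E c - InnerProductSpace.toDual ℝ E (h' y₀)) y₀ := by
    have h1 : HasFDerivAt (fun z => ⟪c, z⟫_ℝ) (InnerProductSpace.toDual ℝ E c : E →L[ℝ] ℝ) y₀ := by
      have : (InnerProductSpace.toDual ℝ E c : E →L[ℝ] ℝ) = innerSL ℝ c := by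
        ext z; simp [InnerProductSpace.toDual_apply_apply]
      rw [this]
      exact (innerSL ℝ c).hasFDerivAt
    have h2 := hdiff y₀
    rw [hasGradientAt_iff_hasFDerivAt] at h2
    exact h1.sub h2
  have hloc : IsLocalMax (fun z => ⟪c, z⟫_ℝ - h z) y₀ :=
    Filter.Eventually.of_forall hmax
  have := hloc.hasFDerivAt_eq_zero hF
  have h0 : InnerProductSpace.toDual ℝ E (c - h' y₀) = 0 := by
    rw [map_sub]; exact this
  have h1 : c - h' y₀ = 0 := by
    have := (InnerProductSpace.toDual ℝ E).map_eq_zero_iff.mp h0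
    exact this
  rw [sub_eq_zero] at h1
  exact h1.symm

end aux2

theorem stmt_2 {n m : ℕ} (Ly : ℝ) (hLy : 0 < Ly)
    (h : EuclideanSpace ℝ (Fin m) → ℝ)
    (hconv : ConvexOn ℝ Set.univ h)
    (h' : EuclideanSpace ℝ (Fin m) → EuclideanSpace ℝ (Fin m))
    (hdiff : ∀ z, HasGradientAt h (h' z) z)
    (hlip : ∀ z₁ z₂, ‖h' z₁ - h' z₂‖ ≤ Ly * ‖z₁ - z₂‖)
    (A : EuclideanSpace ℝ (Fin n) →L[ℝ] EuclideanSpace ℝ (Fin m))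
    (y : EuclideanSpace ℝ (Fin n) → EuclideanSpace ℝ (Fin m))
    (hy : ∀ x z, ⟪A x, z⟫_ℝ - h z ≤ ⟪A x, y x⟫_ℝ - h (y x))
    (g : EuclideanSpace ℝ (Fin n) → ℝ)
    (hg : ∀ x, g x = ⟪A x, y x⟫_ℝ - h (y x))
    (hgrad : ∀ x, HasGradientAt g (ContinuousLinearMap.adjoint A (y x)) x)
    (lam : ℝ) (hlam : 0 < lam)
    -- lam is the smallest positive eigenvalue of AᵀA: on (Ker A)ᗮ one has ‖Av‖² ≥ lam‖v‖²
    (hlam_min : ∀ v ∈ (LinearMap.ker (A : EuclideanSpace ℝ (Fin n) →ₗ[ℝ] EuclideanSpace ℝ (Fin m)))ᗮ, lam * ‖v‖ ^ 2 ≤ ‖A v‖ ^ 2) :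
    ∀ x₁ ∈ (LinearMap.ker (A : EuclideanSpace ℝ (Fin n) →ₗ[ℝ] EuclideanSpace ℝ (Fin m)))ᗮ, ∀ x₂ ∈ (LinearMap.ker (A : EuclideanSpace ℝ (Fin n) →ₗ[ℝ] EuclideanSpace ℝ (Fin m)))ᗮ,
      ⟪ContinuousLinearMap.adjoint A (y x₁) - ContinuousLinearMap.adjoint A (y x₂),
          x₁ - x₂⟫_ℝ ≥ (lam / Ly) * ‖x₁ - x₂‖ ^ 2 := by
  intro x₁ hx₁ x₂ hx₂
  have hA1 : h' (y x₁) = A x₁ := max_grad_eq hdiff (A x₁) (y x₁) (hy x₁)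
  have hA2 : h' (y x₂) = A x₂ := max_grad_eq hdiff (A x₂) (y x₂) (hy x₂)
  have key := cocoercive hLy hconv hdiff hlip (y x₁) (y x₂)
  rw [hA1, hA2] at key
  -- rewrite the target inner product
  have e1 : ⟪ContinuousLinearMap.adjoint A (y x₁) - ContinuousLinearMap.adjoint A (y x₂),
      x₁ - x₂⟫_ℝ = ⟪A x₁ - A x₂, y x₁ - y x₂⟫_ℝ := by
    rw [← map_sub, ContinuousLinearMap.adjoint_inner_left, map_sub, real_inner_comm]
  rw [ge_iff_le, e1]
  have e2 : A x₁ - A x₂ = A (x₁ - x₂) := (map_sub A x₁ x₂).symm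
  have hmem : x₁ - x₂ ∈ (LinearMap.ker (A : EuclideanSpace ℝ (Fin n) →ₗ[ℝ] EuclideanSpace ℝ (Fin m)))ᗮ := Submodule.sub_mem _ hx₁ hx₂
  have h3 := hlam_min (x₁ - x₂) hmem
  have h4 : lam / Ly * ‖x₁ - x₂‖ ^ 2 ≤ 1 / Ly * ‖A x₁ - A x₂‖ ^ 2 := by
    rw [e2]
    rw [div_mul_eq_mul_div, one_div, inv_mul_eq_div]
    gcongr
  calc lam / Ly * ‖x₁ - x₂‖ ^ 2 ≤ 1 / Ly * ‖A x₁ - A x₂‖ ^ 2 := h4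
    _ ≤ ⟪A x₁ - A x₂, y x₁ - y x₂⟫_ℝ := key
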